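/- Let α ∈ ℝ, β ∈ ℝⁿ a constant vector, γ a constant symmetric n×n real matrix, and set G(q) = α q qᵀ + β qᵀ + q βᵀ + γ for q ∈ ℝⁿ. Then the matrix field A(q) = adjugate(G(q)) is a Killing matrix: it is symmetric and its entries satisfy the Killing equations ∂_i A_{jk} + ∂_j A_{ki} + ∂_k A_{ij} = 0 for all i, j, k ∈ {1,…,n}, where ∂_i = ∂/∂q_i and q are Cartesian coordinates on ℝⁿ. -/

import Mathlib

open Finset Matrix

/-- `G(q) = α q qᵀ + β qᵀ + q βᵀ + γ`. -/
def Gmat {n : ℕ} (α : ℝ) (β : Fin n → ℝ) (γ : Matrix (Fin n) (Fin n) ℝ)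
    (q : Fin n → ℝ) : Matrix (Fin n) (Fin n) ℝ :=
  Matrix.of fun i j => α * q i * q j + β i * q j + q i * β j + γ i j

section Jacobi

variable {E : Type*} [NormedAddCommGroup E] [NormedSpace ℝ E] {n : ℕ}

/-- the cofactor identity used for Jacobi's formula -/
lemma adj_eq_sum_perm (M : Matrix (Fin n) (Fin n) ℝ) (l b : Fin n) :
    Matrix.adjugate M l b
      = ∑ σ : Equiv.Perm (Fin n), (Equiv.Perm.sign σ : ℤ) *
          ((if σ l = b then (1:ℝ) else 0) * ∏ m ∈ Finset.univ.erase l, M (σ m) m) := by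
  rw [Matrix.adjugate_apply, Matrix.det_apply]
  refine Finset.sum_congr rfl fun σ _ => ?_
  rw [Units.smul_def, zsmul_eq_mul]
  congr 1
  by_cases h : σ l = b
  · rw [if_pos h, one_mul, ← Finset.mul_prod_erase (a := l) _ _ (Finset.mem_univ l)]
    rw [Matrix.updateRow_apply, if_pos h, Pi.single_eq_same, one_mul]
    refine Finset.prod_congr rfl fun x hx => ?_
    have hxl : x ≠ l := (Finset.mem_erase.mp hx).1
    have : σ x ≠ b := fun hc => hxl (σ.injective (hc.trans h.symm))
    rw [Matrix.updateRow_apply, if_neg this]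
  · rw [if_neg h, zero_mul]
    refine Finset.prod_eq_zero (Finset.mem_univ (σ.symm b)) ?_
    have hne : σ.symm b ≠ l := fun hc => h (by rw [← hc]; simp)
    rw [Matrix.updateRow_apply]
    simp only [Equiv.apply_symm_apply, if_pos rfl]
    exact Pi.single_eq_of_ne hne 1

theorem jacobi_hasFDerivAt (B : E → Matrix (Fin n) (Fin n) ℝ)
    (L : Fin n → Fin n → E →L[ℝ] ℝ) (q : E)
    (hB : ∀ a b, HasFDerivAt (fun w => B w a b) (L a b) q) :
    HasFDerivAt (fun w => (B w).det)
      (∑ a, ∑ b, Matrix.adjugate (B q) a b • L b a) q := by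
  classical
  have hdet : (fun w => (B w).det)
      = fun w => ∑ σ : Equiv.Perm (Fin n),
          ((Equiv.Perm.sign σ : ℤ) : ℝ) * ∏ l, B w (σ l) l := by
    funext w
    rw [Matrix.det_apply]
    refine Finset.sum_congr rfl fun σ _ => ?_
    rw [Units.smul_def, zsmul_eq_mul]
  have h1 : HasFDerivAt
      (fun w => ∑ σ : Equiv.Perm (Fin n),
          ((Equiv.Perm.sign σ : ℤ) : ℝ) * ∏ l, B w (σ l) l)
      (∑ σ : Equiv.Perm (Fin n), ((Equiv.Perm.sign σ : ℤ) : ℝ) •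
        ∑ l, (∏ m ∈ Finset.univ.erase l, B q (σ m) m) • L (σ l) l) q := by
    refine HasFDerivAt.fun_sum fun σ _ => ?_
    exact (HasFDerivAt.finset_prod fun l _ => hB (σ l) l).const_mul _
  rw [hdet]
  refine h1.congr_fderiv ?_
  refine ContinuousLinearMap.ext fun h => ?_
  simp only [ContinuousLinearMap.sum_apply, ContinuousLinearMap.smul_apply, smul_eq_mul]
  calc
    ∑ σ : Equiv.Perm (Fin n), ((Equiv.Perm.sign σ : ℤ) : ℝ) *
        ∑ l, (∏ m ∈ Finset.univ.erase l, B q (σ m) m) * L (σ l) l h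
      = ∑ σ : Equiv.Perm (Fin n), ∑ l, ((Equiv.Perm.sign σ : ℤ) : ℝ) *
          ((∏ m ∈ Finset.univ.erase l, B q (σ m) m) * L (σ l) l h) := by
        refine Finset.sum_congr rfl fun σ _ => ?_
        rw [Finset.mul_sum]
    _ = ∑ l, ∑ σ : Equiv.Perm (Fin n), ((Equiv.Perm.sign σ : ℤ) : ℝ) *
          ((∏ m ∈ Finset.univ.erase l, B q (σ m) m) * L (σ l) l h) := Finset.sum_comm
    _ = ∑ l, ∑ σ : Equiv.Perm (Fin n), ∑ b, ((Equiv.Perm.sign σ : ℤ) : ℝ) *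
          ((if σ l = b then (1:ℝ) else 0) *
            ((∏ m ∈ Finset.univ.erase l, B q (σ m) m) * L b l h)) := by
        refine Finset.sum_congr rfl fun l _ => Finset.sum_congr rfl fun σ _ => ?_
        rw [Finset.sum_eq_single (σ l)]
        · rw [if_pos rfl, one_mul]
        · intro b _ hb
          rw [if_neg (fun hc => hb hc.symm), zero_mul, mul_zero]
        · intro habs; exact absurd (Finset.mem_univ _) habs
    _ = ∑ l, ∑ b, ∑ σ : Equiv.Perm (Fin n), ((Equiv.Perm.sign σ : ℤ) : ℝ) *
          ((if σ l = b then (1:ℝ) else 0) *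
            ((∏ m ∈ Finset.univ.erase l, B q (σ m) m) * L b l h)) :=
        Finset.sum_congr rfl fun l _ => Finset.sum_comm
    _ = ∑ a, ∑ b, Matrix.adjugate (B q) a b * L b a h := by
        refine Finset.sum_congr rfl fun l _ => Finset.sum_congr rfl fun b _ => ?_
        rw [adj_eq_sum_perm, Finset.sum_mul]
        refine Finset.sum_congr rfl fun σ _ => ?_
        ring

end Jacobi

section Main

variable {n : ℕ} (α : ℝ) (β : Fin n → ℝ) (γ : Matrix (Fin n) (Fin n) ℝ)

/-- shifted matrix field -/
def Gt (t : ℝ) (w : Fin n → ℝ) : Matrix (Fin n) (Fin n) ℝ :=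
  Gmat α β γ w + t • 1

/-- derivative of each entry -/
noncomputable def Lmat (q : Fin n → ℝ) (a b : Fin n) : (Fin n → ℝ) →L[ℝ] ℝ :=
  (α * q b + β b) • (ContinuousLinearMap.proj a)
    + (α * q a + β a) • (ContinuousLinearMap.proj b)

lemma Lmat_apply (q : Fin n → ℝ) (a b : Fin n) (h : Fin n → ℝ) :
    Lmat α β q a b h = (α * q b + β b) * h a + (α * q a + β a) * h b := by
  simp [Lmat]

lemma hasFDerivAt_entry (t : ℝ) (q : Fin n → ℝ) (a b : Fin n) :
    HasFDerivAt (fun w => Gt α β γ t w a b) (Lmat α β q a b) q := by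
  have hfun : (fun w => Gt α β γ t w a b)
      = fun w : Fin n → ℝ => α * w a * w b + β a * w b + w a * β b
          + (γ a b + t * (1 : Matrix (Fin n) (Fin n) ℝ) a b) := by
    funext w
    simp [Gt, Gmat, Matrix.add_apply, Matrix.smul_apply]
    ring
  rw [hfun]
  have ha : HasFDerivAt (fun w : Fin n → ℝ => w a)
      (ContinuousLinearMap.proj a : (Fin n → ℝ) →L[ℝ] ℝ) q :=
    hasFDerivAt_apply a q
  have hb : HasFDerivAt (fun w : Fin n → ℝ => w b)
      (ContinuousLinearMap.proj b : (Fin n → ℝ) →L[ℝ] ℝ) q :=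
    hasFDerivAt_apply b q
  have h0 := (((((ha.const_mul α).mul hb).add (hb.const_mul (β a))).add
    (ha.mul_const (β b))).add
    (hasFDerivAt_const (γ a b + t * (1 : Matrix (Fin n) (Fin n) ℝ) a b) q))
  refine h0.congr_fderiv ?_
  refine ContinuousLinearMap.ext fun h => ?_
  simp only [Lmat, ContinuousLinearMap.add_apply, ContinuousLinearMap.smul_apply,
    ContinuousLinearMap.proj_apply, ContinuousLinearMap.zero_apply, smul_eq_mul,
    ContinuousLinearMap.coe_smul', Pi.smul_apply, add_zero]
  ring

lemma hasFDerivAt_adj (t : ℝ) (q : Fin n → ℝ) (a b : Fin n) :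
    HasFDerivAt (fun w => Matrix.adjugate (Gt α β γ t w) a b)
      (∑ c, ∑ d, Matrix.adjugate ((Gt α β γ t q).updateRow b (Pi.single a 1)) c d •
        (if d = b then (0 : (Fin n → ℝ) →L[ℝ] ℝ) else Lmat α β q d c)) q := by
  have hN : ∀ c d : Fin n,
      HasFDerivAt (fun w => (Gt α β γ t w).updateRow b (Pi.single a 1) c d)
        (if c = b then (0 : (Fin n → ℝ) →L[ℝ] ℝ) else Lmat α β q c d) q := by
    intro c d
    by_cases h : c = b
    · simp only [Matrix.updateRow_apply, if_pos h]
      exact hasFDerivAt_const _ _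
    · simp only [Matrix.updateRow_apply, if_neg h]
      exact hasFDerivAt_entry α β γ t q c d
  have := jacobi_hasFDerivAt (fun w => (Gt α β γ t w).updateRow b (Pi.single a 1))
    (fun c d => if c = b then (0 : (Fin n → ℝ) →L[ℝ] ℝ) else Lmat α β q c d) q hN
  have hfun : (fun w => Matrix.adjugate (Gt α β γ t w) a b)
      = fun w => ((Gt α β γ t w).updateRow b (Pi.single a 1)).det := by
    funext w; rw [Matrix.adjugate_apply]
  rw [hfun]
  exact this


lemma key (hγ : γ.IsSymm) (t : ℝ) (q : Fin n → ℝ)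
    (hdet : (Gt α β γ t q).det ≠ 0) (i j k : Fin n) :
    fderiv ℝ (fun w => Matrix.adjugate (Gt α β γ t w) j k) q (Pi.single i 1)
      + fderiv ℝ (fun w => Matrix.adjugate (Gt α β γ t w) k i) q (Pi.single j 1)
      + fderiv ℝ (fun w => Matrix.adjugate (Gt α β γ t w) i j) q (Pi.single k 1) = 0 := by
  classical
  -- notation
  set M : Matrix (Fin n) (Fin n) ℝ := Gt α β γ t q with hMdef
  set A : Matrix (Fin n) (Fin n) ℝ := Matrix.adjugate (Gt α β γ t q) with hAdef
  set D : Fin n → Fin n → ((Fin n → ℝ) →L[ℝ] ℝ) :=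
    fun a b => fderiv ℝ (fun w => Matrix.adjugate (Gt α β γ t w) a b) q with hDdef
  set v : Fin n → ℝ := fun c => α * q c + β c with hvdef
  set u : Fin n → ℝ := fun c => ∑ a, A c a * v a with hudef
  set T : (Fin n → ℝ) →L[ℝ] ℝ := ∑ a, ∑ b, A a b • Lmat α β q b a with hTdef
  -- symmetry
  have hMsymm : Mᵀ = M := by
    rw [hMdef]
    show (Gmat α β γ q + t • 1)ᵀ = _
    rw [Matrix.transpose_add, Matrix.transpose_smul, Matrix.transpose_one]
    congr 1
    ext a b
    show Gmat α β γ q b a = Gmat α β γ q a b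
    have hg : γ b a = γ a b := congrFun (congrFun hγ a) b
    simp only [Gmat, Matrix.of_apply]
    rw [hg]; ring
  have hA : ∀ a b, A a b = A b a := by
    intro a b
    have h1 : Aᵀ = A := by
      rw [hAdef, ← hMdef, Matrix.adjugate_transpose M, hMsymm]
    exact (congrFun (congrFun h1 b) a).symm ▸ (congrFun (congrFun h1 b) a)
  -- derivatives
  have hD : ∀ a b, HasFDerivAt (fun w => Matrix.adjugate (Gt α β γ t w) a b) (D a b) q :=
    fun a b => ((hasFDerivAt_adj α β γ t q a b).differentiableAt).hasFDerivAt
  have hT : HasFDerivAt (fun w => (Gt α β γ t w).det) T q :=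
    jacobi_hasFDerivAt _ (Lmat α β q) q (fun a b => hasFDerivAt_entry α β γ t q a b)
  -- product rule on M * adj M = det M • 1
  have eqs : ∀ a b (h : Fin n → ℝ),
      ∑ c, (M a c * D c b h + A c b * Lmat α β q a c h)
        = (if a = b then (1:ℝ) else 0) * T h := by
    intro a b h
    have hfe : (fun w => ∑ c, Gt α β γ t w a c * Matrix.adjugate (Gt α β γ t w) c b)
        = fun w => (Gt α β γ t w).det * (if a = b then (1:ℝ) else 0) := by
      funext w
      rw [← Matrix.mul_apply, Matrix.mul_adjugate]
      simp [Matrix.smul_apply, Matrix.one_apply]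
    have hlhs : HasFDerivAt
        (fun w => ∑ c, Gt α β γ t w a c * Matrix.adjugate (Gt α β γ t w) c b)
        (∑ c, (Gt α β γ t q a c • D c b + Matrix.adjugate (Gt α β γ t q) c b •
          Lmat α β q a c)) q :=
      HasFDerivAt.fun_sum fun c _ => (hasFDerivAt_entry α β γ t q a c).mul (hD c b)
    have hrhs : HasFDerivAt
        (fun w => (Gt α β γ t w).det * (if a = b then (1:ℝ) else 0))
        ((if a = b then (1:ℝ) else 0) • T) q := hT.mul_const _
    rw [hfe] at hlhs
    have huniq := hlhs.unique hrhs
    have happ := congrArg (fun (Φ : (Fin n → ℝ) →L[ℝ] ℝ) => Φ h) huniq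
    simp only [ContinuousLinearMap.sum_apply, ContinuousLinearMap.add_apply,
      ContinuousLinearMap.smul_apply, smul_eq_mul] at happ
    rw [← hMdef, ← hAdef] at happ
    rw [happ]
    try (by_cases hab : a = b <;> simp [hab])
  -- multiply by adjugate: solve for D
  have adjmulM : ∀ c e, ∑ a, A c a * M a e = M.det * (if c = e then (1:ℝ) else 0) := by
    intro c e
    have h1 : (A * M) c e = (M.det • (1 : Matrix (Fin n) (Fin n) ℝ)) c e := by
      rw [hAdef, ← hMdef, Matrix.adjugate_mul]
    rw [Matrix.mul_apply] at h1
    simpa [Matrix.smul_apply, Matrix.one_apply] using h1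
  have eq2 : ∀ c b (h : Fin n → ℝ),
      M.det * D c b h
        = A c b * T h - ∑ a, A c a * (∑ e, A e b * Lmat α β q a e h) := by
    intro c b h
    have hsplit : ∀ a, ∑ e, M a e * D e b h
        = (if a = b then (1:ℝ) else 0) * T h - ∑ e, A e b * Lmat α β q a e h := by
      intro a
      have := eqs a b h
      rw [Finset.sum_add_distrib] at this
      linarith [this]
    calc M.det * D c b h
        = ∑ e, (M.det * (if c = e then (1:ℝ) else 0)) * D e b h := by
          symm
          rw [Finset.sum_eq_single c]
          · rw [if_pos rfl, mul_one]
          · intro e _ hec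
            rw [if_neg (fun hce => hec hce.symm), mul_zero, zero_mul]
          · intro habs; exact absurd (Finset.mem_univ c) habs
      _ = ∑ e, (∑ a, A c a * M a e) * D e b h := by
          refine Finset.sum_congr rfl fun e _ => ?_
          rw [adjmulM]
      _ = ∑ a, A c a * (∑ e, M a e * D e b h) := by
          have hre : ∀ e : Fin n, (∑ a, A c a * M a e) * D e b h
              = ∑ a, A c a * (M a e * D e b h) := fun e => by
            rw [Finset.sum_mul]
            exact Finset.sum_congr rfl fun a _ => by ring
          rw [Finset.sum_congr rfl fun e _ => hre e, Finset.sum_comm]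
          exact Finset.sum_congr rfl fun a _ => (Finset.mul_sum _ _ _).symm
      _ = ∑ a, (A c a * ((if a = b then (1:ℝ) else 0) * T h)
            - A c a * (∑ e, A e b * Lmat α β q a e h)) := by
          refine Finset.sum_congr rfl fun a _ => ?_
          rw [hsplit a, mul_sub]
      _ = A c b * T h - ∑ a, A c a * (∑ e, A e b * Lmat α β q a e h) := by
          rw [Finset.sum_sub_distrib]
          congr 1
          have hterm : ∀ a : Fin n, A c a * ((if a = b then (1:ℝ) else 0) * T h)
              = if a = b then A c a * T h else 0 := by
            intro a; by_cases hh : a = b <;> simp [hh]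
          rw [Finset.sum_congr rfl fun a _ => hterm a,
            Finset.sum_ite_eq' Finset.univ b (fun a => A c a * T h)]
          simp
  -- evaluate at coordinate directions
  have hLs : ∀ a e i' : Fin n, Lmat α β q a e (Pi.single i' 1)
      = v e * (if a = i' then 1 else 0) + v a * (if e = i' then 1 else 0) := by
    intro a e i'
    rw [Lmat_apply]
    simp only [hvdef, Pi.single_apply]
  have hub : ∀ b, ∑ e, v e * A e b = u b := by
    intro b
    rw [hudef]
    refine Finset.sum_congr rfl fun e _ => ?_
    rw [hA b e]; ring
  have hinner : ∀ a b i' : Fin n, ∑ e, A e b * Lmat α β q a e (Pi.single i' 1)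
      = (if a = i' then (1:ℝ) else 0) * u b + v a * A i' b := by
    intro a b i'
    rw [Finset.sum_congr rfl fun e _ => by rw [hLs a e i', mul_add],
      Finset.sum_add_distrib]
    congr 1
    · rw [← hub b, Finset.mul_sum]
      refine Finset.sum_congr rfl fun e _ => ?_
      ring
    · have : ∀ e : Fin n, A e b * (v a * (if e = i' then (1:ℝ) else 0))
          = if e = i' then A e b * v a else 0 := by
        intro e; by_cases hh : e = i' <;> simp [hh]
      rw [Finset.sum_congr rfl fun e _ => this e,
        Finset.sum_ite_eq' Finset.univ i' (fun e => A e b * v a)]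
      simp [mul_comm]
  have houter : ∀ c b i' : Fin n,
      ∑ a, A c a * (∑ e, A e b * Lmat α β q a e (Pi.single i' 1))
        = A c i' * u b + u c * A i' b := by
    intro c b i'
    rw [Finset.sum_congr rfl fun a _ => by rw [hinner a b i', mul_add],
      Finset.sum_add_distrib]
    congr 1
    · have : ∀ a : Fin n, A c a * ((if a = i' then (1:ℝ) else 0) * u b)
          = if a = i' then A c a * u b else 0 := by
        intro a; by_cases hh : a = i' <;> simp [hh]
      rw [Finset.sum_congr rfl fun a _ => this a,
        Finset.sum_ite_eq' Finset.univ i' (fun a => A c a * u b)]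
      simp
    · rw [hudef, Finset.sum_mul]
      refine Finset.sum_congr rfl fun a _ => ?_
      ring
  have hTs : ∀ i' : Fin n, T (Pi.single i' 1) = 2 * u i' := by
    intro i'
    rw [hTdef]
    simp only [ContinuousLinearMap.sum_apply, ContinuousLinearMap.smul_apply, smul_eq_mul]
    have hin : ∀ a : Fin n, ∑ b, A a b * Lmat α β q b a (Pi.single i' 1)
        = A a i' * v a + (if a = i' then (1:ℝ) else 0) * u a := by
      intro a
      rw [Finset.sum_congr rfl fun b _ => by rw [hLs b a i', mul_add],
        Finset.sum_add_distrib]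
      congr 1
      · have : ∀ b : Fin n, A a b * (v a * (if b = i' then (1:ℝ) else 0))
            = if b = i' then A a b * v a else 0 := by
          intro b; by_cases hh : b = i' <;> simp [hh]
        rw [Finset.sum_congr rfl fun b _ => this b,
          Finset.sum_ite_eq' Finset.univ i' (fun b => A a b * v a)]
        simp
      · rw [hudef, Finset.mul_sum]
        refine Finset.sum_congr rfl fun b _ => ?_
        ring
    rw [Finset.sum_congr rfl fun a _ => hin a, Finset.sum_add_distrib]
    have h1 : ∑ a, A a i' * v a = u i' := by
      rw [hudef]
      refine Finset.sum_congr rfl fun a _ => ?_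
      rw [hA a i']
    have h2 : ∑ a, (if a = i' then (1:ℝ) else 0) * u a = u i' := by
      have : ∀ a : Fin n, (if a = i' then (1:ℝ) else 0) * u a
          = if a = i' then u a else 0 := by
        intro a; by_cases hh : a = i' <;> simp [hh]
      rw [Finset.sum_congr rfl fun a _ => this a,
        Finset.sum_ite_eq' Finset.univ i' (fun a => u a)]
      simp
    rw [h1, h2]; ring
  have eq3 : ∀ c b i' : Fin n, M.det * D c b (Pi.single i' 1)
      = 2 * u i' * A c b - A c i' * u b - u c * A i' b := by
    intro c b i'
    rw [eq2 c b (Pi.single i' 1), hTs i', houter c b i']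
    ring
  have hsum : M.det * (D j k (Pi.single i 1) + D k i (Pi.single j 1)
      + D i j (Pi.single k 1)) = 0 := by
    rw [mul_add, mul_add, eq3 j k i, eq3 k i j, eq3 i j k, hA j i, hA k j, hA i k]
    ring
  have hfin := mul_left_cancel₀ hdet (hsum.trans (mul_zero M.det).symm)
  exact hfin

lemma contDiff_adj_entry (a b : Fin n) :
    ContDiff ℝ 1 (fun p : ℝ × (Fin n → ℝ) =>
      Matrix.adjugate (Gt α β γ p.1 p.2) a b) := by
  classical
  have hentry : ∀ x y : Fin n,
      ContDiff ℝ 1 (fun p : ℝ × (Fin n → ℝ) => Gt α β γ p.1 p.2 x y) := by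
    intro x y
    have hfun : (fun p : ℝ × (Fin n → ℝ) => Gt α β γ p.1 p.2 x y)
        = fun p : ℝ × (Fin n → ℝ) => α * p.2 x * p.2 y + β x * p.2 y + p.2 x * β y
            + (γ x y + p.1 * (1 : Matrix (Fin n) (Fin n) ℝ) x y) := by
      funext p
      simp [Gt, Gmat, Matrix.add_apply, Matrix.smul_apply]
      ring
    rw [hfun]
    have hx : ContDiff ℝ 1 (fun p : ℝ × (Fin n → ℝ) => p.2 x) :=
      (contDiff_pi.mp contDiff_snd) x
    have hy : ContDiff ℝ 1 (fun p : ℝ × (Fin n → ℝ) => p.2 y) :=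
      (contDiff_pi.mp contDiff_snd) y
    exact ((((contDiff_const.mul hx).mul hy).add (contDiff_const.mul hy)).add
      (hx.mul contDiff_const)).add
      (contDiff_const.add (contDiff_fst.mul contDiff_const))
  have hU : ∀ x y : Fin n,
      ContDiff ℝ 1 (fun p : ℝ × (Fin n → ℝ) =>
        ((Gt α β γ p.1 p.2).updateRow b (Pi.single a 1)) x y) := by
    intro x y
    by_cases h : x = b
    · simp only [Matrix.updateRow_apply, if_pos h]
      exact contDiff_const
    · simp only [Matrix.updateRow_apply, if_neg h]
      exact hentry x y
  have hfun : (fun p : ℝ × (Fin n → ℝ) => Matrix.adjugate (Gt α β γ p.1 p.2) a b)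
      = fun p : ℝ × (Fin n → ℝ) => ∑ σ : Equiv.Perm (Fin n),
          ((Equiv.Perm.sign σ : ℤ) : ℝ) *
            ∏ m, ((Gt α β γ p.1 p.2).updateRow b (Pi.single a 1)) (σ m) m := by
    funext p
    rw [Matrix.adjugate_apply, Matrix.det_apply]
    refine Finset.sum_congr rfl fun σ _ => ?_
    rw [Units.smul_def, zsmul_eq_mul]
  rw [hfun]
  exact ContDiff.sum fun σ _ =>
    contDiff_const.mul (contDiff_prod fun m _ => hU (σ m) m)

lemma cont_fderiv_adj (q : Fin n → ℝ) (a b c : Fin n) :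
    Continuous (fun t : ℝ =>
      fderiv ℝ (fun w => Matrix.adjugate (Gt α β γ t w) a b) q (Pi.single c 1)) := by
  classical
  set g : ℝ × (Fin n → ℝ) → ℝ :=
    fun p => Matrix.adjugate (Gt α β γ p.1 p.2) a b with hgdef
  have hg : ContDiff ℝ 1 g := contDiff_adj_entry α β γ a b
  have hrw : ∀ t : ℝ,
      fderiv ℝ (fun w => Matrix.adjugate (Gt α β γ t w) a b) q (Pi.single c 1)
        = fderiv ℝ g (t, q) ((0 : ℝ), Pi.single c 1) := by
    intro t
    have hqt : HasFDerivAt (fun w : Fin n → ℝ => ((t, w) : ℝ × (Fin n → ℝ)))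
        (((0 : (Fin n → ℝ) →L[ℝ] ℝ)).prod (ContinuousLinearMap.id ℝ (Fin n → ℝ))) q :=
      HasFDerivAt.prodMk (hasFDerivAt_const t q) (hasFDerivAt_id q)
    have hgd : HasFDerivAt g (fderiv ℝ g (t, q)) (t, q) :=
      ((hg.differentiable one_ne_zero) (t, q)).hasFDerivAt
    have hco := hgd.comp q hqt
    have : fderiv ℝ (fun w => Matrix.adjugate (Gt α β γ t w) a b) q
        = (fderiv ℝ g (t, q)).comp
            (((0 : (Fin n → ℝ) →L[ℝ] ℝ)).prod (ContinuousLinearMap.id ℝ (Fin n → ℝ))) :=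
      hco.fderiv
    rw [this]
    simp
  rw [funext hrw]
  have hcont : Continuous (fderiv ℝ g) := hg.continuous_fderiv one_ne_zero
  exact (hcont.comp (continuous_id.prodMk continuous_const)).clm_apply continuous_const

lemma det_finite_zeros (q : Fin n → ℝ) :
    {t : ℝ | (Gt α β γ t q).det = 0}.Finite := by
  classical
  set p : Polynomial ℝ := Matrix.charpoly (-(Gmat α β γ q)) with hpdef
  have heval : ∀ t : ℝ, Polynomial.eval t p = (Gt α β γ t q).det := by
    intro t
    have h1 : Polynomial.eval t p
        = ((Matrix.charmatrix (-(Gmat α β γ q))).map (Polynomial.evalRingHom t)).det := by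
      rw [hpdef, Matrix.charpoly, ← RingHom.mapMatrix_apply, ← RingHom.map_det]
      rfl
    rw [h1]
    congr 1
    ext x y
    by_cases hxy : x = y
    · subst hxy
      rw [Matrix.map_apply, Matrix.charmatrix_apply_eq]
      simp [Gt, Matrix.add_apply, Matrix.smul_apply, Matrix.one_apply]
      ring
    · rw [Matrix.map_apply, Matrix.charmatrix_apply_ne _ _ _ hxy]
      simp [Gt, Matrix.add_apply, Matrix.smul_apply, Matrix.one_apply_ne hxy]
  have hpne : p ≠ 0 := (Matrix.charpoly_monic _).ne_zero
  have hsub : {t : ℝ | (Gt α β γ t q).det = 0} ⊆ {t : ℝ | Polynomial.IsRoot p t} := by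
    intro t ht
    simp only [Set.mem_setOf_eq, Polynomial.IsRoot] at *
    rw [heval t]; exact ht
  exact (Polynomial.finite_setOf_isRoot hpne).subset hsub

end Main

/-- STATEMENT 17: `A(q) = adjugate(G(q))` is a Killing matrix: it is symmetric
and `∂_i A_{jk} + ∂_j A_{ki} + ∂_k A_{ij} = 0` for all `i, j, k`. -/
theorem stmt17 (n : ℕ) (α : ℝ) (β : Fin n → ℝ)
    (γ : Matrix (Fin n) (Fin n) ℝ) (hγ : γ.IsSymm) :
    (∀ q : Fin n → ℝ, (Matrix.adjugate (Gmat α β γ q)).IsSymm)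
    ∧ ∀ (q : Fin n → ℝ) (i j k : Fin n),
        fderiv ℝ (fun w => Matrix.adjugate (Gmat α β γ w) j k) q (Pi.single i 1)
          + fderiv ℝ (fun w => Matrix.adjugate (Gmat α β γ w) k i) q
              (Pi.single j 1)
          + fderiv ℝ (fun w => Matrix.adjugate (Gmat α β γ w) i j) q
              (Pi.single k 1) = 0 := by
  classical
  have hGsym : ∀ q : Fin n → ℝ, (Gmat α β γ q)ᵀ = Gmat α β γ q := by
    intro q
    ext a b
    show Gmat α β γ q b a = Gmat α β γ q a b
    have hg : γ b a = γ a b := congrFun (congrFun hγ a) b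
    simp only [Gmat, Matrix.of_apply]
    rw [hg]; ring
  constructor
  · intro q
    show (Matrix.adjugate (Gmat α β γ q))ᵀ = Matrix.adjugate (Gmat α β γ q)
    rw [Matrix.adjugate_transpose, hGsym q]
  · intro q i j k
    set S : ℝ → ℝ := fun t =>
      fderiv ℝ (fun w => Matrix.adjugate (Gt α β γ t w) j k) q (Pi.single i 1)
        + fderiv ℝ (fun w => Matrix.adjugate (Gt α β γ t w) k i) q (Pi.single j 1)
        + fderiv ℝ (fun w => Matrix.adjugate (Gt α β γ t w) i j) q (Pi.single k 1)
      with hSdef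
    have hScont : Continuous S :=
      ((cont_fderiv_adj α β γ q j k i).add (cont_fderiv_adj α β γ q k i j)).add
        (cont_fderiv_adj α β γ q i j k)
    have hSzero : ∀ t : ℝ, t ∈ {t : ℝ | (Gt α β γ t q).det = 0}ᶜ → S t = 0 := by
      intro t ht
      exact key α β γ hγ t q ht i j k
    have hdense : Dense {t : ℝ | (Gt α β γ t q).det = 0}ᶜ :=
      Set.Countable.dense_compl ℝ (det_finite_zeros α β γ q).countable
    have hS0 : S = fun _ => 0 :=
      Continuous.ext_on hdense hScont continuous_const hSzero
    have h0 : S 0 = 0 := by rw [hS0]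
    have hg0 : Gt α β γ 0 = Gmat α β γ := by
      funext w
      simp [Gt]
    rw [← hg0]
    exact h0
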